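/- With D as defined above, for all n ≥ 2 and all real b_1, …, b_n ≥ 0, D(b_1, …, b_n) - D(b_2, …, b_n) ≥ 0; that is, D is monotone under prepending a nonnegative variable. -/

import Mathlib

open Matrix Finset

def Dmat (n : ℕ) (b : Fin n → ℝ) : Matrix (Fin n) (Fin n) ℝ :=
  fun i j => (∑ t : Fin n, if n - 1 - min i.1 j.1 ≤ t.1 then b t else 0) +
    (if i = j then 1 else 0)

noncomputable def D (n : ℕ) (b : Fin n → ℝ) : ℝ := (Dmat n b).det

def uvec (m : ℕ) (t i : Fin m) : ℝ := if m - 1 - i.1 ≤ t.1 then 1 else 0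


lemma Dmat_apply (m : ℕ) (b : Fin m → ℝ) (i j : Fin m) :
    Dmat m b i j = (∑ t, b t * uvec m t i * uvec m t j) + (if i = j then 1 else 0) := by
  unfold Dmat uvec
  congr 1
  refine Finset.sum_congr rfl fun t _ => ?_
  have hi := i.isLt; have hj := j.isLt; have ht := t.isLt
  split_ifs <;> first | ring1 | (exfalso; omega)

lemma Dmat_isHermitian (m : ℕ) (b : Fin m → ℝ) : (Dmat m b).IsHermitian := by
  apply Matrix.ext
  intro i j
  simp only [conjTranspose_apply, star_trivial, Dmat_apply]
  rw [if_congr (Iff.intro Eq.symm Eq.symm) rfl rfl]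
  congr 1
  exact Finset.sum_congr rfl fun t _ => by ring

lemma Dmat_mulVec (m : ℕ) (b x : Fin m → ℝ) (i : Fin m) :
    (Dmat m b *ᵥ x) i
      = (∑ t, b t * uvec m t i * (∑ j, uvec m t j * x j)) + x i := by
  simp only [mulVec, dotProduct, Dmat_apply, add_mul, Finset.sum_add_distrib]
  congr 1
  · simp only [Finset.sum_mul]
    rw [Finset.sum_comm]
    refine Finset.sum_congr rfl fun t _ => ?_
    rw [Finset.mul_sum]
    exact Finset.sum_congr rfl fun j _ => by ring
  · simp [ite_mul]

lemma Dmat_quad (m : ℕ) (b x : Fin m → ℝ) :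
    x ⬝ᵥ (Dmat m b *ᵥ x) = (∑ t, b t * (∑ i, uvec m t i * x i) ^ 2) + ∑ i, x i ^ 2 := by
  simp only [dotProduct]
  have : ∀ i, x i * (Dmat m b *ᵥ x) i
      = (∑ t, x i * (b t * uvec m t i * (∑ j, uvec m t j * x j))) + x i ^ 2 := by
    intro i
    rw [Dmat_mulVec, mul_add, Finset.mul_sum, pow_two]
  simp only [this, Finset.sum_add_distrib]
  congr 1
  rw [Finset.sum_comm]
  refine Finset.sum_congr rfl fun t _ => ?_
  have h2 : ∀ i, x i * (b t * uvec m t i * (∑ j, uvec m t j * x j))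
      = (uvec m t i * x i) * (b t * (∑ j, uvec m t j * x j)) := fun i => by ring
  simp only [h2]
  rw [← Finset.sum_mul, pow_two]
  ring

lemma Dmat_posDef (m : ℕ) (b : Fin m → ℝ) (hb : ∀ i, 0 ≤ b i) : (Dmat m b).PosDef := by
  refine posDef_iff_dotProduct_mulVec.mpr ⟨Dmat_isHermitian m b, fun x hx => ?_⟩
  have hs : star x = x := by funext i; simp
  rw [hs, Dmat_quad]
  have h1 : 0 ≤ ∑ t, b t * (∑ i, uvec m t i * x i) ^ 2 :=
    Finset.sum_nonneg fun t _ => mul_nonneg (hb t) (sq_nonneg _)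
  have h2 : 0 < ∑ i, x i ^ 2 := by
    obtain ⟨i, hi⟩ := Function.ne_iff.mp hx
    exact Finset.sum_pos' (fun j _ => sq_nonneg _)
      ⟨i, Finset.mem_univ i, lt_of_le_of_ne (sq_nonneg _) (Ne.symm (pow_ne_zero 2 hi))⟩
  linarith

def cvec (n : ℕ) (b : Fin (n + 2) → ℝ) (i : Fin (n + 1)) : ℝ :=
  ∑ t : Fin (n + 1), b t.succ * uvec (n + 1) t i

lemma block_eq (n : ℕ) (b : Fin (n + 2) → ℝ) :
    (Dmat (n + 2) b).submatrix (finSumFinEquiv : Fin (n+1) ⊕ Fin 1 ≃ Fin (n+2)) (finSumFinEquiv : Fin (n+1) ⊕ Fin 1 ≃ Fin (n+2)) =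
      fromBlocks (Dmat (n + 1) fun i => b i.succ)
        (Matrix.of fun i (_ : Fin 1) => cvec n b i)
        (Matrix.of fun (_ : Fin 1) j => cvec n b j)
        (Matrix.of fun (_ : Fin 1) (_ : Fin 1) => (∑ t, b t) + 1) := by
  apply Matrix.ext
  rintro (i | i) (j | j) <;>
    simp only [submatrix_apply, finSumFinEquiv_apply_left, finSumFinEquiv_apply_right,
      fromBlocks_apply₁₁, fromBlocks_apply₁₂, fromBlocks_apply₂₁, fromBlocks_apply₂₂,
      Matrix.of_apply]
  · -- top-left
    have hi := i.isLt; have hj := j.isLt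
    show _ = Dmat (n + 1) (fun i => b i.succ) i j
    unfold Dmat
    rw [Fin.sum_univ_succ]
    simp only [Fin.coe_castAdd, Fin.val_zero, Fin.val_succ]
    simp only [show ¬ (n + 2 - 1 - min i.1 j.1 ≤ 0) by omega, if_false, zero_add]
    congr 1
    · exact Finset.sum_congr rfl fun t _ => if_congr (by omega) rfl rfl
    · simp [Fin.ext_iff]
  · -- top-right
    have hi := i.isLt; have hj : j.1 = 0 := by omega
    unfold Dmat cvec
    rw [Fin.sum_univ_succ]
    simp only [Fin.coe_castAdd, Fin.coe_natAdd, Fin.val_zero, Fin.val_succ]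
    simp only [show ¬ (n + 2 - 1 - min i.1 (n + 1 + j.1) ≤ 0) by omega, if_false, zero_add]
    rw [if_neg (by simp [Fin.ext_iff]; omega), add_zero]
    refine Finset.sum_congr rfl fun t _ => ?_
    have ht := t.isLt
    simp only [uvec, mul_ite, mul_one, mul_zero]
    exact if_congr (by omega) rfl rfl
  · -- bottom-left
    have hj := j.isLt; have hi : i.1 = 0 := by omega
    unfold Dmat cvec
    rw [Fin.sum_univ_succ]
    simp only [Fin.coe_castAdd, Fin.coe_natAdd, Fin.val_zero, Fin.val_succ]
    simp only [show ¬ (n + 2 - 1 - min (n + 1 + i.1) j.1 ≤ 0) by omega, if_false, zero_add]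
    rw [if_neg (by simp [Fin.ext_iff]; omega), add_zero]
    refine Finset.sum_congr rfl fun t _ => ?_
    have ht := t.isLt
    simp only [uvec, mul_ite, mul_one, mul_zero]
    exact if_congr (by omega) rfl rfl
  · -- bottom-right
    have hi : i.1 = 0 := by omega
    have hj : j.1 = 0 := by omega
    unfold Dmat
    rw [if_pos (by simp [Fin.ext_iff]; try omega)]
    congr 1
    refine Finset.sum_congr rfl fun t _ => ?_
    rw [if_pos (by simp only [Fin.coe_natAdd]; omega)]

lemma key_ineq (m : ℕ) (b : Fin m → ℝ) (hb : ∀ i, 0 ≤ b i) (c w : Fin m → ℝ)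
    (hc : ∀ i, c i = ∑ t, b t * uvec m t i)
    (hw : Dmat m b *ᵥ w = c) :
    c ⬝ᵥ w ≤ ∑ t, b t := by
  classical
  set g : Fin m → ℝ := fun t => ∑ j, uvec m t j * w j with hg
  have hw' : ∀ i, (∑ t, b t * uvec m t i * g t) + w i = ∑ t, b t * uvec m t i := by
    intro i
    have h := congrFun hw i
    rw [Dmat_mulVec] at h
    rw [h, hc]
  have e2 : c ⬝ᵥ w = ∑ t, b t * g t := by
    simp only [dotProduct, hc, Finset.sum_mul]
    rw [Finset.sum_comm]
    refine Finset.sum_congr rfl fun t _ => ?_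
    rw [hg, Finset.mul_sum]
    exact Finset.sum_congr rfl fun i _ => by ring
  have lhs : ∑ i, ((∑ t, b t * uvec m t i * g t) + w i) * w i
      = (∑ t, b t * g t ^ 2) + ∑ i, w i ^ 2 := by
    simp only [add_mul, Finset.sum_add_distrib, Finset.sum_mul]
    congr 1
    · rw [Finset.sum_comm]
      refine Finset.sum_congr rfl fun t _ => ?_
      have h2 : ∀ i, b t * uvec m t i * g t * w i = (uvec m t i * w i) * (b t * g t) :=
        fun i => by ring
      simp only [h2]
      rw [← Finset.sum_mul, show (∑ i, uvec m t i * w i) = g t from rfl]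
      ring
    · exact Finset.sum_congr rfl fun i _ => by ring
  have rhs : ∑ i, (∑ t, b t * uvec m t i) * w i = ∑ t, b t * g t := by
    simp only [Finset.sum_mul]
    rw [Finset.sum_comm]
    refine Finset.sum_congr rfl fun t _ => ?_
    have h2 : ∀ i, b t * uvec m t i * w i = (uvec m t i * w i) * b t := fun i => by ring
    simp only [h2]
    rw [← Finset.sum_mul, show (∑ i, uvec m t i * w i) = g t from rfl]
    ring
  have e1 : (∑ t, b t * g t ^ 2) + ∑ i, w i ^ 2 = ∑ t, b t * g t := by
    rw [← lhs, ← rhs]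
    exact Finset.sum_congr rfl fun i _ => by rw [hw' i]
  have texp : ∑ t, b t * (1 - g t) ^ 2
      = (∑ t, b t) - 2 * (∑ t, b t * g t) + ∑ t, b t * g t ^ 2 := by
    have h2 : ∀ t, b t * (1 - g t) ^ 2 = b t - 2 * (b t * g t) + b t * g t ^ 2 :=
      fun t => by ring
    simp only [h2]
    rw [Finset.sum_add_distrib, Finset.sum_sub_distrib, Finset.mul_sum]
  have tnn : 0 ≤ ∑ t, b t * (1 - g t) ^ 2 :=
    Finset.sum_nonneg fun t _ => mul_nonneg (hb t) (sq_nonneg _)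
  have wnn : 0 ≤ ∑ i, w i ^ 2 := Finset.sum_nonneg fun i _ => sq_nonneg _
  rw [e2]
  linarith

/-- For `n ≥ 2` and nonnegative `b_1,…,b_n`,
`D(b_1,…,b_n) - D(b_2,…,b_n) ≥ 0` (here `n+2` variables). -/
theorem D_monotone_prepend (n : ℕ) (b : Fin (n + 2) → ℝ) (hb : ∀ i, 0 ≤ b i) :
    0 ≤ D (n + 2) b - D (n + 1) (fun i => b i.succ) := by
  classical
  have hb' : ∀ i : Fin (n + 1), 0 ≤ b i.succ := fun i => hb _
  have hpd : (Dmat (n + 1) fun i => b i.succ).PosDef := Dmat_posDef _ _ hb'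
  have hdet : 0 < (Dmat (n + 1) fun i => b i.succ).det := hpd.det_pos
  haveI : Invertible (Dmat (n + 1) fun i => b i.succ) :=
    (Dmat (n + 1) fun i => b i.succ).invertibleOfIsUnitDet hdet.ne'.isUnit
  set A := Dmat (n + 1) fun i => b i.succ with hA
  set w : Fin (n + 1) → ℝ := ⅟A *ᵥ cvec n b with hwdef
  have hAw : A *ᵥ w = cvec n b := by
    rw [hwdef, Matrix.mulVec_mulVec, mul_invOf_self, Matrix.one_mulVec]
  have hkey : cvec n b ⬝ᵥ w ≤ ∑ t : Fin (n + 1), b t.succ :=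
    key_ineq (n + 1) (fun i => b i.succ) hb' (cvec n b) w (fun i => rfl) hAw
  have hsum : ∑ t : Fin (n + 1), b t.succ ≤ ∑ t : Fin (n + 2), b t := by
    rw [show (∑ t : Fin (n + 2), b t) = b 0 + ∑ t : Fin (n + 1), b t.succ from
      Fin.sum_univ_succ b]
    exact le_add_of_nonneg_left (hb 0)
  have hD2 : D (n + 2) b = A.det * (((∑ t, b t) + 1) - cvec n b ⬝ᵥ w) := by
    have h0 : D (n + 2) b = ((Dmat (n + 2) b).submatrix
        (finSumFinEquiv : Fin (n+1) ⊕ Fin 1 ≃ Fin (n+2))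
        (finSumFinEquiv : Fin (n+1) ⊕ Fin 1 ≃ Fin (n+2))).det :=
      (Matrix.det_submatrix_equiv_self _ _).symm
    rw [h0, block_eq, Matrix.det_fromBlocks₁₁]
    congr 1
    rw [Matrix.det_fin_one]
    simp only [Matrix.sub_apply, Matrix.of_apply, Matrix.mul_apply, dotProduct, hwdef, mulVec]
    congr 1
    simp only [Finset.sum_mul, Finset.mul_sum]
    rw [Finset.sum_comm]
    refine Finset.sum_congr rfl fun k _ => Finset.sum_congr rfl fun j _ => ?_
    show cvec n b k * ⅟A k j * cvec n b j = cvec n b k * (⅟A k j * cvec n b j)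
    ring
  have hD1 : D (n + 1) (fun i => b i.succ) = A.det := rfl
  rw [hD2, hD1]
  have : A.det * (((∑ t, b t) + 1) - cvec n b ⬝ᵥ w) - A.det
      = A.det * ((∑ t, b t) - cvec n b ⬝ᵥ w) := by ring
  rw [this]
  exact mul_nonneg hdet.le (by linarith)
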